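/- Let λ ≠ 0. Define the 2×2 matrices A(u, v) = [[−v, −1], [u v + 1/λ, u]] and B(u, v) = [[−v, −1], [u v + 1/λ − 1, u]]. For real numbers u, u₁₀, u₀₁, u₁₁ with u₁₀ ≠ u₀₁, the discrete zero-curvature condition A(u₀₁, u₁₁) · B(u, u₀₁) = B(u₁₀, u₁₁) · A(u, u₁₀) holds if and only if u₁₁ = u + 1/(u₁₀ − u₀₁). -/

import Mathlib

/-- The `n`-shift Lax matrix of the discrete KdV equation. -/
noncomputable def laxA (lam : ℝ) (u v : ℝ) : Matrix (Fin 2) (Fin 2) ℝ :=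
  !![-v, -1; u * v + 1 / lam, u]

/-- The `m`-shift Lax matrix of the discrete KdV equation. -/
noncomputable def laxB (lam : ℝ) (u v : ℝ) : Matrix (Fin 2) (Fin 2) ℝ :=
  !![-v, -1; u * v + 1 / lam - 1, u]

/-- The discrete zero-curvature condition `A(u₀₁,u₁₁) B(u,u₀₁) = B(u₁₀,u₁₁) A(u,u₁₀)`
holds iff `u₁₁ = u + 1/(u₁₀ − u₀₁)`, i.e. iff `u` satisfies the discrete KdV equation. -/
theorem discrete_KdV_zero_curvature
    (lam : ℝ) (hlam : lam ≠ 0)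
    (u u10 u01 u11 : ℝ) (h : u10 ≠ u01) :
    laxA lam u01 u11 * laxB lam u u01 = laxB lam u10 u11 * laxA lam u u10
      ↔ u11 = u + 1 / (u10 - u01) := by
  have hd : u10 - u01 ≠ 0 := sub_ne_zero.mpr h
  simp only [laxA, laxB, Matrix.mul_fin_two, ← Matrix.ext_iff, Fin.forall_fin_two,
    Matrix.of_apply, Matrix.cons_val', Matrix.cons_val_zero, Matrix.cons_val_one,
    Matrix.head_cons, Matrix.empty_val', Matrix.cons_val_fin_one, Matrix.head_fin_const]
  constructor
  · rintro ⟨⟨h00, h01⟩, h10, h11⟩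
    field_simp at h00 ⊢
    nlinarith [h00, sq_nonneg (u10 - u01)]
  · intro hu
    subst hu
    refine ⟨⟨?_, ?_⟩, ?_, ?_⟩
    · field_simp
      ring
    · trivial
    · field_simp
      ring
    · field_simp
      ring
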